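/- Let λ ∈ M_m(ℂ) be such that Im(λ) := (λ − λ*)/(2i) is positive definite, and let H be a Hermitian (mn)×(mn) matrix. Then λ⊗I_n − H is invertible and, writing R = (λ⊗I_n − H)^{-1} with m×m blocks R_{kl}: (i) ‖R‖ ≤ ‖(Im λ)^{-1}‖; (ii) ‖R_{kl}‖ ≤ ‖(Im λ)^{-1}‖ for all 1 ≤ k,l ≤ n; (iii) for every real p ≥ 2, (1/n)·Σ_{k,l=1}^n ‖R_{kl}‖^p ≤ m·‖(Im λ)^{-1}‖^p. -/

import Mathlib

open scoped Kronecker ComplexOrder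

/-- The operator (spectral) norm of a square complex matrix. -/
noncomputable def opNorm {ι : Type*} [Fintype ι] [DecidableEq ι] (M : Matrix ι ι ℂ) : ℝ :=
  ‖Matrix.toEuclideanCLM (𝕜 := ℂ) M‖

/-- The `(k,l)` block (an `m × m` matrix) of a matrix `M ∈ M_m(ℂ) ⊗ M_n(ℂ)`. -/
def blk {m n : ℕ} (M : Matrix (Fin m × Fin n) (Fin m × Fin n) ℂ) (k l : Fin n) :
    Matrix (Fin m) (Fin m) ℂ :=
  Matrix.of fun a b => M (a, k) (b, l)

/-- The imaginary part `(T - T*) / (2i)` of a square complex matrix. -/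
noncomputable def imPart {ι : Type*} (T : Matrix ι ι ℂ) : Matrix ι ι ℂ :=
  (2 * Complex.I)⁻¹ • (T - T.conjTranspose)

set_option linter.unusedSectionVars false

namespace Stmt6Aux
open Matrix
variable {ι : Type*} [Fintype ι] [DecidableEq ι]

noncomputable def eE (v : ι → ℂ) : EuclideanSpace ℂ ι := (WithLp.equiv 2 (ι → ℂ)).symm v

lemma norm_eE_sq (v : ι → ℂ) : ‖eE v‖ ^ 2 = ∑ i, ‖v i‖ ^ 2 := by
  rw [EuclideanSpace.norm_eq, Real.sq_sqrt (by positivity)]; rfl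

lemma toCLM_eE (M : Matrix ι ι ℂ) (v : ι → ℂ) :
    Matrix.toEuclideanCLM (𝕜 := ℂ) M (eE v) = eE (M *ᵥ v) := by
  rw [eE, WithLp.equiv_symm_apply, Matrix.toEuclideanCLM_toLp]; rfl

lemma norm_mulVec_le (M : Matrix ι ι ℂ) (v : ι → ℂ) :
    ‖eE (M *ᵥ v)‖ ≤ opNorm M * ‖eE v‖ := by
  rw [← toCLM_eE]; exact (Matrix.toEuclideanCLM (𝕜 := ℂ) M).le_opNorm _

lemma opNorm_nonneg (M : Matrix ι ι ℂ) : 0 ≤ opNorm M := norm_nonneg _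

lemma opNorm_le_of (M : Matrix ι ι ℂ) {c : ℝ} (hc : 0 ≤ c)
    (h : ∀ v : ι → ℂ, ‖eE (M *ᵥ v)‖ ≤ c * ‖eE v‖) : opNorm M ≤ c := by
  apply ContinuousLinearMap.opNorm_le_bound _ hc
  intro x
  have h2 := h (WithLp.equiv 2 (ι → ℂ) x)
  have h3 : eE (WithLp.equiv 2 (ι → ℂ) x) = x := (WithLp.equiv 2 (ι → ℂ)).symm_apply_apply x
  rw [h3] at h2
  rw [← h3, toCLM_eE, h3]
  exact h2

lemma inner_eE (x y : ι → ℂ) : (inner ℂ (eE x) (eE y) : ℂ) = star x ⬝ᵥ y := by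
  simp [eE, PiLp.inner_apply, dotProduct, RCLike.inner_apply, mul_comm]

lemma le_of_sq_le_sq {a b : ℝ} (h : a ^ 2 ≤ b ^ 2) (hb : 0 ≤ b) : a ≤ b := by
  nlinarith [sq_nonneg (a - b), sq_nonneg (a + b)]

lemma re_dot_self (w : ι → ℂ) : (star w ⬝ᵥ w).re = ∑ a, ‖w a‖ ^ 2 := by
  rw [dotProduct, Complex.re_sum]
  congr 1; ext a
  rw [Pi.star_apply, mul_comm, Complex.star_def, Complex.mul_conj]
  simp [Complex.normSq_eq_norm_sq]
  norm_cast

open scoped MatrixOrder in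
lemma posdef_coercive {S : Matrix ι ι ℂ} (hS : S.PosDef) (u : ι → ℂ) :
    ∑ a, ‖u a‖ ^ 2 ≤ opNorm S⁻¹ * (star u ⬝ᵥ S *ᵥ u).re := by
  set Q := CFC.sqrt S with hQdef
  have hQps : Q.PosSemidef := (CFC.sqrt_nonneg S).posSemidef
  have hQherm : Qᴴ = Q := hQps.isHermitian
  have hQQ : Q * Q = S := CFC.sqrt_mul_sqrt_self S hS.posSemidef.nonneg
  have hSdet : IsUnit S.det := (Matrix.isUnit_iff_isUnit_det _).mp hS.isUnit
  have hQdet : IsUnit Q.det := by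
    rw [← hQQ, Matrix.det_mul] at hSdet
    exact (IsUnit.mul_iff.mp hSdet).1
  have key1 : star (Q *ᵥ u) ⬝ᵥ (Q *ᵥ u) = star u ⬝ᵥ S *ᵥ u := by
    rw [star_mulVec, ← Matrix.dotProduct_mulVec, Matrix.mulVec_mulVec, hQherm, hQQ]
  have hmv : Q⁻¹ *ᵥ (Q *ᵥ u) = u := by
    rw [Matrix.mulVec_mulVec, Matrix.nonsing_inv_mul _ hQdet, Matrix.one_mulVec]
  have h3 : ‖eE u‖ ≤ opNorm Q⁻¹ * ‖eE (Q *ᵥ u)‖ := by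
    calc ‖eE u‖ = ‖eE (Q⁻¹ *ᵥ (Q *ᵥ u))‖ := by rw [hmv]
      _ ≤ _ := norm_mulVec_le _ _
  have h4 : opNorm Q⁻¹ ^ 2 = opNorm S⁻¹ := by
    have h5 : (Q⁻¹)ᴴ = Q⁻¹ := by rw [Matrix.conjTranspose_nonsing_inv, hQherm]
    have h6 : Q⁻¹ * Q⁻¹ = S⁻¹ := by rw [← hQQ, Matrix.mul_inv_rev]
    unfold opNorm
    rw [sq, ← CStarRing.norm_star_mul_self, ← map_star (Matrix.toEuclideanCLM (𝕜 := ℂ)),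
      ← _root_.map_mul]
    congr 2
    rw [star_eq_conjTranspose, h5, h6]
  calc ∑ a, ‖u a‖ ^ 2 = ‖eE u‖ ^ 2 := (norm_eE_sq u).symm
    _ ≤ (opNorm Q⁻¹ * ‖eE (Q *ᵥ u)‖) ^ 2 := by
        apply pow_le_pow_left₀ (norm_nonneg _) h3 2
    _ = opNorm S⁻¹ * (‖eE (Q *ᵥ u)‖ ^ 2) := by rw [mul_pow, h4]
    _ = opNorm S⁻¹ * (star u ⬝ᵥ S *ᵥ u).re := by
        rw [norm_eE_sq, ← key1, re_dot_self]

lemma kron_mulVec {m n : ℕ} (S : Matrix (Fin m) (Fin m) ℂ) (x : Fin m × Fin n → ℂ)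
    (a : Fin m) (k : Fin n) :
    ((S ⊗ₖ (1 : Matrix (Fin n) (Fin n) ℂ)) *ᵥ x) (a, k) = (S *ᵥ fun b => x (b, k)) a := by
  simp only [Matrix.mulVec, dotProduct, Fintype.sum_prod_type,
    Matrix.kroneckerMap_apply, Matrix.one_apply, mul_ite, mul_one, mul_zero, ite_mul, zero_mul]
  rw [Finset.sum_comm]
  simp

lemma dot_kron {m n : ℕ} (S : Matrix (Fin m) (Fin m) ℂ) (x : Fin m × Fin n → ℂ) :
    star x ⬝ᵥ (S ⊗ₖ (1 : Matrix (Fin n) (Fin n) ℂ)) *ᵥ x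
      = ∑ k : Fin n, (star (fun b => x (b, k)) ⬝ᵥ S *ᵥ (fun b => x (b, k))) := by
  rw [dotProduct, Fintype.sum_prod_type_right]
  congr 1; ext k
  rw [dotProduct]
  refine Finset.sum_congr rfl fun a _ => ?_
  rw [kron_mulVec]
  rfl

lemma coercive_kron {m n : ℕ} {S : Matrix (Fin m) (Fin m) ℂ} (hS : S.PosDef)
    (x : Fin m × Fin n → ℂ) :
    ∑ i : Fin m × Fin n, ‖x i‖ ^ 2
      ≤ opNorm S⁻¹ * (star x ⬝ᵥ (S ⊗ₖ (1 : Matrix (Fin n) (Fin n) ℂ)) *ᵥ x).re := by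
  rw [dot_kron, Complex.re_sum, Finset.mul_sum, Fintype.sum_prod_type_right]
  exact Finset.sum_le_sum fun k _ => posdef_coercive hS _

lemma imPart_kron {m n : ℕ} (lam : Matrix (Fin m) (Fin m) ℂ)
    (H : Matrix (Fin m × Fin n) (Fin m × Fin n) ℂ) (hH : H.IsHermitian) :
    imPart (lam ⊗ₖ (1 : Matrix (Fin n) (Fin n) ℂ) - H) = (imPart lam) ⊗ₖ 1 := by
  ext ⟨a, k⟩ ⟨b, l⟩
  have hHe : (starRingEnd ℂ) (H (b, l) (a, k)) = H (a, k) (b, l) := by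
    conv_rhs => rw [← hH]
    rfl
  simp only [imPart, Matrix.smul_apply, Matrix.sub_apply, Matrix.conjTranspose_apply,
    Matrix.kroneckerMap_apply, Matrix.one_apply, smul_eq_mul, Matrix.of_apply]
  rw [star_sub, star_mul']
  simp only [RCLike.star_def, hHe, Matrix.one_apply]
  by_cases h : k = l
  · subst h
    simp only [eq_self_iff_true, if_true, _root_.map_one, mul_one]
    ring
  · rw [if_neg h, if_neg (fun hh : l = k => h hh.symm)]
    simp only [map_zero, mul_zero, zero_sub, mul_zero]
    ring

lemma im_dot (T : Matrix ι ι ℂ) (x : ι → ℂ) :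
    (star x ⬝ᵥ (imPart T) *ᵥ x).re = (star x ⬝ᵥ T *ᵥ x).im := by
  have hconj : star x ⬝ᵥ Tᴴ *ᵥ x = (starRingEnd ℂ) (star x ⬝ᵥ T *ᵥ x) := by
    rw [Matrix.star_dotProduct, Matrix.star_mulVec, Matrix.conjTranspose_conjTranspose,
      ← Matrix.dotProduct_mulVec]
    rfl
  rw [imPart, Matrix.smul_mulVec, dotProduct_smul, Matrix.sub_mulVec,
    dotProduct_sub, hconj, Complex.sub_conj]
  set z := star x ⬝ᵥ T *ᵥ x
  have : (2 * Complex.I)⁻¹ • ((↑(2 * z.im) : ℂ) * Complex.I) = (z.im : ℂ) := by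
    push_cast
    field_simp
    rw [smul_eq_mul, one_div_mul_eq_div,
      mul_div_cancel_left₀ _ (mul_ne_zero two_ne_zero Complex.I_ne_zero)]
  rw [this, Complex.ofReal_re]

lemma blk_opNorm_le {m n : ℕ} (M : Matrix (Fin m × Fin n) (Fin m × Fin n) ℂ) (k l : Fin n) :
    opNorm (blk M k l) ≤ opNorm M := by
  apply opNorm_le_of _ (opNorm_nonneg M)
  intro u
  set w : Fin m × Fin n → ℂ := fun p => if p.2 = l then u p.1 else 0 with hw
  have h1 : ∀ a, ((blk M k l) *ᵥ u) a = (M *ᵥ w) (a, k) := by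
    intro a
    rw [Matrix.mulVec, Matrix.mulVec, dotProduct, dotProduct,
      Fintype.sum_prod_type]
    refine Finset.sum_congr rfl fun b _ => ?_
    simp only [hw, mul_ite, mul_zero]
    rw [Finset.sum_ite_eq' Finset.univ l (fun l' => M (a, k) (b, l') * u b)]
    simp [blk]
  have h2 : ∑ p : Fin m × Fin n, ‖w p‖ ^ 2 = ∑ b, ‖u b‖ ^ 2 := by
    rw [Fintype.sum_prod_type_right]
    have hterm : ∀ (l' : Fin n) (b : Fin m),
        ‖w (b, l')‖ ^ 2 = if l' = l then ‖u b‖ ^ 2 else 0 := by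
      intro l' b
      simp only [hw]
      split_ifs <;> simp
    simp_rw [hterm]
    rw [Finset.sum_comm]
    simp
  have h3 : ‖eE ((blk M k l) *ᵥ u)‖ ^ 2 ≤ ‖eE (M *ᵥ w)‖ ^ 2 := by
    rw [norm_eE_sq, norm_eE_sq, Fintype.sum_prod_type_right]
    calc ∑ a, ‖((blk M k l) *ᵥ u) a‖ ^ 2 = ∑ a, ‖(M *ᵥ w) (a, k)‖ ^ 2 := by simp_rw [h1]
      _ ≤ ∑ k' : Fin n, ∑ a, ‖(M *ᵥ w) (a, k')‖ ^ 2 := by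
          exact Finset.single_le_sum (f := fun k' => ∑ a, ‖(M *ᵥ w) (a, k')‖ ^ 2)
            (fun _ _ => by positivity) (Finset.mem_univ k)
  have h4 : ‖eE (M *ᵥ w)‖ ≤ opNorm M * ‖eE u‖ := by
    have h5 : ‖eE w‖ = ‖eE u‖ := by
      have e1 : ‖eE w‖ ^ 2 = ‖eE u‖ ^ 2 := by rw [norm_eE_sq, norm_eE_sq, h2]
      exact le_antisymm (le_of_sq_le_sq e1.le (norm_nonneg _))
        (le_of_sq_le_sq e1.ge (norm_nonneg _))
    have := norm_mulVec_le M w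
    rwa [h5] at this
  refine le_trans (le_of_sq_le_sq h3 (norm_nonneg _)) h4

lemma opNorm_sq_le_frob {k : ℕ} (A : Matrix (Fin k) (Fin k) ℂ) :
    opNorm A ^ 2 ≤ ∑ a, ∑ b, ‖A a b‖ ^ 2 := by
  have hs : (0:ℝ) ≤ ∑ a, ∑ b, ‖A a b‖ ^ 2 := by positivity
  have hb : opNorm A ≤ Real.sqrt (∑ a, ∑ b, ‖A a b‖ ^ 2) := by
    apply opNorm_le_of _ (Real.sqrt_nonneg _)
    intro u
    apply le_of_sq_le_sq _ (by positivity)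
    rw [mul_pow, Real.sq_sqrt hs, norm_eE_sq, norm_eE_sq]
    calc ∑ a, ‖(A *ᵥ u) a‖ ^ 2
        ≤ ∑ a, (∑ b, ‖A a b‖ ^ 2) * (∑ b, ‖u b‖ ^ 2) := by
          refine Finset.sum_le_sum fun a _ => ?_
          have h1 : ‖(A *ᵥ u) a‖ ≤ ∑ b, ‖A a b‖ * ‖u b‖ := by
            rw [Matrix.mulVec, dotProduct]
            exact (norm_sum_le _ _).trans (le_of_eq (by simp [norm_mul]))
          calc ‖(A *ᵥ u) a‖ ^ 2 ≤ (∑ b, ‖A a b‖ * ‖u b‖) ^ 2 :=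
                pow_le_pow_left₀ (norm_nonneg _) h1 2
            _ ≤ _ := Finset.sum_mul_sq_le_sq_mul_sq _ _ _
      _ = (∑ a, ∑ b, ‖A a b‖ ^ 2) * (∑ b, ‖u b‖ ^ 2) := by rw [← Finset.sum_mul]
  calc opNorm A ^ 2 ≤ Real.sqrt (∑ a, ∑ b, ‖A a b‖ ^ 2) ^ 2 :=
        pow_le_pow_left₀ (opNorm_nonneg _) hb 2
    _ = _ := Real.sq_sqrt hs

lemma col_sq_le (M : Matrix ι ι ℂ) (j : ι) :
    ∑ i, ‖M i j‖ ^ 2 ≤ opNorm M ^ 2 := by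
  have h1 : (fun i => M i j) = M *ᵥ Pi.single j 1 := by
    funext i; rw [Matrix.mulVec_single]; simp
  have h2 := norm_mulVec_le M (Pi.single j 1)
  have h3 : ‖eE (Pi.single j (1:ℂ) : ι → ℂ)‖ ^ 2 = 1 := by
    rw [norm_eE_sq]
    simp [Pi.single_apply, apply_ite]
  calc ∑ i, ‖M i j‖ ^ 2 = ‖eE (M *ᵥ Pi.single j 1)‖ ^ 2 := by
        rw [norm_eE_sq, ← h1]
    _ ≤ (opNorm M * ‖eE (Pi.single j (1:ℂ) : ι → ℂ)‖) ^ 2 :=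
        pow_le_pow_left₀ (norm_nonneg _) h2 2
    _ = opNorm M ^ 2 * ‖eE (Pi.single j (1:ℂ) : ι → ℂ)‖ ^ 2 := mul_pow _ _ 2
    _ = opNorm M ^ 2 := by rw [h3, mul_one]

lemma part3 {m n : ℕ} {x : Fin n → Fin n → ℝ} {K : ℝ} (hK0 : 0 ≤ K)
    (hx0 : ∀ k l, 0 ≤ x k l) (hxK : ∀ k l, x k l ≤ K)
    (hsum2 : ∑ k, ∑ l, (x k l) ^ (2:ℕ) ≤ (m * n : ℝ) * K ^ (2:ℕ))
    {p : ℝ} (hp : 2 ≤ p) :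
    (1 / (n : ℝ)) * ∑ k, ∑ l, x k l ^ p ≤ (m : ℝ) * K ^ p := by
  have hKp0 : (0:ℝ) ≤ K ^ p := Real.rpow_nonneg hK0 p
  rcases eq_or_lt_of_le hK0 with hKz | hKpos
  · have hz : ∀ k l, x k l = 0 := fun k l => le_antisymm (hKz ▸ hxK k l) (hx0 k l)
    have hzz : ∑ k, ∑ l, x k l ^ p = 0 := by
      refine Finset.sum_eq_zero fun k _ => Finset.sum_eq_zero fun l _ => ?_
      rw [hz k l]
      exact Real.zero_rpow (by linarith)
    rw [hzz, mul_zero]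
    positivity
  · have hterm : ∀ k l, x k l ^ p ≤ K ^ (p - 2) * x k l ^ (2:ℕ) := by
      intro k l
      rcases eq_or_lt_of_le (hx0 k l) with h0 | h0
      · rw [← h0, Real.zero_rpow (by linarith : p ≠ 0)]
        simp
      · have e1 : x k l ^ p = x k l ^ (p - 2) * x k l ^ (2:ℕ) := by
          rw [← Real.rpow_natCast (x k l) 2, ← Real.rpow_add h0]
          norm_num
        rw [e1]
        exact mul_le_mul_of_nonneg_right
          (Real.rpow_le_rpow h0.le (hxK k l) (by linarith)) (by positivity)
    have hsump : ∑ k, ∑ l, x k l ^ p ≤ (m * n : ℝ) * K ^ p := by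
      calc ∑ k, ∑ l, x k l ^ p
          ≤ ∑ k, ∑ l, K ^ (p - 2) * x k l ^ (2:ℕ) :=
            Finset.sum_le_sum fun k _ => Finset.sum_le_sum fun l _ => hterm k l
        _ = K ^ (p - 2) * ∑ k, ∑ l, x k l ^ (2:ℕ) := by
            simp_rw [Finset.mul_sum]
        _ ≤ K ^ (p - 2) * ((m * n : ℝ) * K ^ (2:ℕ)) :=
            mul_le_mul_of_nonneg_left hsum2 (by positivity)
        _ = (m * n : ℝ) * (K ^ (p - 2) * K ^ (2:ℕ)) := by ring
        _ = (m * n : ℝ) * K ^ p := by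
            rw [← Real.rpow_natCast K 2, ← Real.rpow_add hKpos]
            norm_num
    rcases Nat.eq_zero_or_pos n with hn | hn
    · subst hn
      simp only [Finset.univ_eq_empty, Finset.sum_empty, mul_zero]
      positivity
    · have hn' : (0:ℝ) < n := by exact_mod_cast hn
      calc (1 / (n : ℝ)) * ∑ k, ∑ l, x k l ^ p
          ≤ (1 / (n : ℝ)) * ((m * n : ℝ) * K ^ p) := by
            apply mul_le_mul_of_nonneg_left hsump (by positivity)
        _ = (m : ℝ) * K ^ p := by
            field_simp

end Stmt6Aux

open Matrix Stmt6Aux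

/-- if `Im λ` is positive definite and `H` is Hermitian, then `λ ⊗ Iₙ - H` is
invertible and its inverse `R` satisfies `‖R‖ ≤ ‖(Im λ)⁻¹‖`, `‖R_{kl}‖ ≤ ‖(Im λ)⁻¹‖` for all
`k, l`, and `(1/n) Σ_{k,l} ‖R_{kl}‖^p ≤ m ‖(Im λ)⁻¹‖^p` for every real `p ≥ 2`. -/
theorem stmt6 {m n : ℕ} (lam : Matrix (Fin m) (Fin m) ℂ) (hlam : (imPart lam).PosDef)
    (H : Matrix (Fin m × Fin n) (Fin m × Fin n) ℂ) (hH : H.IsHermitian) :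
    IsUnit (lam ⊗ₖ (1 : Matrix (Fin n) (Fin n) ℂ) - H) ∧
    opNorm ((lam ⊗ₖ (1 : Matrix (Fin n) (Fin n) ℂ) - H)⁻¹) ≤ opNorm ((imPart lam)⁻¹) ∧
    (∀ k l : Fin n,
      opNorm (blk ((lam ⊗ₖ (1 : Matrix (Fin n) (Fin n) ℂ) - H)⁻¹) k l)
        ≤ opNorm ((imPart lam)⁻¹)) ∧
    ∀ p : ℝ, 2 ≤ p →
      (1 / (n : ℝ)) * ∑ k : Fin n, ∑ l : Fin n,
          opNorm (blk ((lam ⊗ₖ (1 : Matrix (Fin n) (Fin n) ℂ) - H)⁻¹) k l) ^ p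
        ≤ (m : ℝ) * opNorm ((imPart lam)⁻¹) ^ p := by

  classical
  set T : Matrix (Fin m × Fin n) (Fin m × Fin n) ℂ := lam ⊗ₖ 1 - H with hTdef
  set K : ℝ := opNorm ((imPart lam)⁻¹) with hKdef
  have hK0 : 0 ≤ K := opNorm_nonneg _
  -- core coercivity
  have hcoer2 : ∀ x : Fin m × Fin n → ℂ,
      ‖eE x‖ ^ 2 ≤ K * (‖eE x‖ * ‖eE (T *ᵥ x)‖) := by
    intro x
    have h1 := coercive_kron (n := n) hlam x
    rw [← imPart_kron lam H hH, ← hTdef] at h1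
    rw [im_dot] at h1
    have h2 : (star x ⬝ᵥ T *ᵥ x).im ≤ ‖eE x‖ * ‖eE (T *ᵥ x)‖ := by
      have h3 : (star x ⬝ᵥ T *ᵥ x).im ≤ ‖star x ⬝ᵥ T *ᵥ x‖ := by
        exact (le_abs_self _).trans (Complex.abs_im_le_norm _)
      have h4 : ‖(inner ℂ (eE x) (eE (T *ᵥ x)) : ℂ)‖ ≤ ‖eE x‖ * ‖eE (T *ᵥ x)‖ :=
        norm_inner_le_norm _ _
      rw [inner_eE] at h4
      exact h3.trans h4
    calc ‖eE x‖ ^ 2 = ∑ i, ‖x i‖ ^ 2 := norm_eE_sq x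
      _ ≤ K * (star x ⬝ᵥ T *ᵥ x).im := h1
      _ ≤ K * (‖eE x‖ * ‖eE (T *ᵥ x)‖) := by
          exact mul_le_mul_of_nonneg_left h2 hK0
  have hKx : ∀ x : Fin m × Fin n → ℂ, ‖eE x‖ ≤ K * ‖eE (T *ᵥ x)‖ := by
    intro x
    rcases eq_or_lt_of_le (norm_nonneg (eE x)) with h0 | h0
    · rw [← h0]
      positivity
    · have h := hcoer2 x
      nlinarith [norm_nonneg (eE (T *ᵥ x))]
  -- invertibility
  have hker : ∀ x : Fin m × Fin n → ℂ, T *ᵥ x = 0 → x = 0 := by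
    intro x hx
    have h := hKx x
    rw [hx] at h
    have h0 : eE (0 : Fin m × Fin n → ℂ) = 0 := by
      ext i
      rfl
    rw [h0, norm_zero, mul_zero] at h
    have : eE x = 0 := by
      rw [← norm_le_zero_iff]
      exact h
    have := congrArg (WithLp.equiv 2 (Fin m × Fin n → ℂ)) this
    simpa [eE] using this
  have hinj : Function.Injective (T.mulVec) := by
    intro x y hxy
    have : T *ᵥ (x - y) = 0 := by
      rw [Matrix.mulVec_sub, hxy, sub_self]
    have := hker _ this
    exact sub_eq_zero.mp this
  have hunit : IsUnit T := Matrix.mulVec_injective_iff_isUnit.mp hinj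
  have hTdet' : IsUnit T.det := (Matrix.isUnit_iff_isUnit_det _).mp hunit
  have hTR : ∀ v : Fin m × Fin n → ℂ, T *ᵥ (T⁻¹ *ᵥ v) = v := by
    intro v
    rw [Matrix.mulVec_mulVec, Matrix.mul_nonsing_inv _ hTdet', Matrix.one_mulVec]
  -- statement (i)
  have hi : opNorm T⁻¹ ≤ K := by
    apply opNorm_le_of _ hK0
    intro v
    have h := hKx (T⁻¹ *ᵥ v)
    rwa [hTR] at h
  -- statement (ii)
  have hii : ∀ k l : Fin n, opNorm (blk T⁻¹ k l) ≤ K :=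
    fun k l => (blk_opNorm_le T⁻¹ k l).trans hi
  refine ⟨hunit, hi, hii, ?_⟩
  -- statement (iii)
  intro p hp
  have hblk0 : ∀ k l, 0 ≤ opNorm (blk T⁻¹ k l) := fun k l => opNorm_nonneg _
  -- sum of squares bound
  have hsum2 : ∑ k : Fin n, ∑ l : Fin n, opNorm (blk T⁻¹ k l) ^ (2:ℕ)
      ≤ (m * n : ℝ) * K ^ (2:ℕ) := by
    have e1 : ∀ k l : Fin n, opNorm (blk T⁻¹ k l) ^ (2:ℕ)
        ≤ ∑ a : Fin m, ∑ b : Fin m, ‖T⁻¹ (a, k) (b, l)‖ ^ 2 := by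
      intro k l
      exact opNorm_sq_le_frob (blk T⁻¹ k l)
    calc ∑ k : Fin n, ∑ l : Fin n, opNorm (blk T⁻¹ k l) ^ (2:ℕ)
        ≤ ∑ k : Fin n, ∑ l : Fin n, ∑ a : Fin m, ∑ b : Fin m, ‖T⁻¹ (a, k) (b, l)‖ ^ 2 :=
          Finset.sum_le_sum fun k _ => Finset.sum_le_sum fun l _ => e1 k l
      _ = ∑ l : Fin n, ∑ b : Fin m, ∑ k : Fin n, ∑ a : Fin m, ‖T⁻¹ (a, k) (b, l)‖ ^ 2 := by
          rw [Finset.sum_comm]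
          refine Finset.sum_congr rfl fun l _ => ?_
          have hswap : ∀ k : Fin n,
              (∑ a : Fin m, ∑ b : Fin m, ‖T⁻¹ (a, k) (b, l)‖ ^ 2)
                = ∑ b : Fin m, ∑ a : Fin m, ‖T⁻¹ (a, k) (b, l)‖ ^ 2 :=
            fun _ => Finset.sum_comm
          calc ∑ k : Fin n, ∑ a : Fin m, ∑ b : Fin m, ‖T⁻¹ (a, k) (b, l)‖ ^ 2
              = ∑ k : Fin n, ∑ b : Fin m, ∑ a : Fin m, ‖T⁻¹ (a, k) (b, l)‖ ^ 2 :=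
                Finset.sum_congr rfl fun k _ => hswap k
            _ = ∑ b : Fin m, ∑ k : Fin n, ∑ a : Fin m, ‖T⁻¹ (a, k) (b, l)‖ ^ 2 :=
                Finset.sum_comm
      _ ≤ ∑ _l : Fin n, ∑ _b : Fin m, K ^ (2:ℕ) := by
          refine Finset.sum_le_sum fun l _ => Finset.sum_le_sum fun b _ => ?_
          have h1 : ∑ k : Fin n, ∑ a : Fin m, ‖T⁻¹ (a, k) (b, l)‖ ^ 2
              = ∑ i : Fin m × Fin n, ‖T⁻¹ i (b, l)‖ ^ 2 :=
            (Fintype.sum_prod_type_right (f := fun i : Fin m × Fin n => ‖T⁻¹ i (b, l)‖ ^ 2)).symm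
          rw [h1]
          calc ∑ i : Fin m × Fin n, ‖T⁻¹ i (b, l)‖ ^ 2 ≤ opNorm T⁻¹ ^ 2 :=
                col_sq_le T⁻¹ (b, l)
            _ ≤ K ^ 2 := pow_le_pow_left₀ (opNorm_nonneg _) hi 2
      _ = (m * n : ℝ) * K ^ (2:ℕ) := by
          rw [Finset.sum_const, Finset.sum_const]
          simp [Finset.card_univ]
          ring
  exact Stmt6Aux.part3 hK0 hblk0 hii hsum2 hp
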